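/- Let $P$ be a probability measure on a compact set $\mathcal{X}^p$, $\Phi:\mathcal{X}^p\to\mathbb{R}^d$ bounded measurable with $A := \mathbb{E}_X\mathbb{E}_{X'}[\Phi(X')K(X',X)\Phi(X)^\top]$ invertible, and $K$ a symmetric positive semidefinite kernel on $\mathcal{X}^p\times\mathcal{X}^p$. Define $K_\delta(x,x') = K(x,x') - \mathbb{E}_X[\Phi(X)^\top K(x,X)]\, A^{-1}\, \mathbb{E}_{X'}[\Phi(X')K(x',X')]$. Then for any $m\ge 1$, coefficients $c_1,\dots,c_m\in\mathbb{R}$, and points $x_1,\dots,x_m\in\mathcal{X}^p$, the function $\widehat\delta(x) = \sum_{i=1}^m c_i K_\delta(x,x_i)$ satisfies $\mathbb{E}_X[\Phi(X)\widehat\delta(X)] = 0$. -/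
import Mathlib


open MeasureTheory

/-- Decomposition orthogonality of the projected kernel. With
`A = E_X E_{X'}[Φ(X') K(X',X) Φ(X)ᵀ]` invertible and
`K_δ(x,x') = K(x,x') - E_X[Φ(X)ᵀ K(x,X)] A⁻¹ E_{X'}[Φ(X') K(x',X')]`,
every finite expansion `δ̂(x) = ∑ c_i K_δ(x, x_i)` satisfies `E_X[Φ(X) δ̂(X)] = 0`. -/
theorem projected_kernel_orthogonal
    {X : Type*} [MeasurableSpace X] [TopologicalSpace X] [CompactSpace X]
    (P : Measure X) [IsProbabilityMeasure P]
    {d : ℕ} (Φ : X → Fin d → ℝ) (hΦmeas : Measurable Φ)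
    (hΦbd : ∃ C : ℝ, ∀ x, ‖Φ x‖ ≤ C)
    (K : X → X → ℝ) (hKmeas : Measurable fun p : X × X => K p.1 p.2)
    (hKbd : ∃ C : ℝ, ∀ x x', |K x x'| ≤ C)
    (hKsymm : ∀ x x', K x x' = K x' x)
    (hKpsd : ∀ (n : ℕ) (c : Fin n → ℝ) (xs : Fin n → X),
      0 ≤ ∑ i, ∑ j, c i * c j * K (xs i) (xs j))
    (A : Matrix (Fin d) (Fin d) ℝ)
    (hA : ∀ k l, A k l = ∫ x, (∫ x', Φ x' k * K x' x ∂P) * Φ x l ∂P)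
    (hAinv : IsUnit A.det)
    (Kδ : X → X → ℝ)
    (hKδ : ∀ x x', Kδ x x' = K x x' -
      ∑ k, ∑ l, (∫ z, Φ z k * K x z ∂P) * A⁻¹ k l * (∫ z, Φ z l * K x' z ∂P)) :
    ∀ (m : ℕ) (c : Fin m → ℝ) (xs : Fin m → X) (k : Fin d),
      ∫ x, Φ x k * (∑ i, c i * Kδ x (xs i)) ∂P = 0 := by
  obtain ⟨CΦ, hCΦ⟩ := hΦbd
  obtain ⟨CK, hCK⟩ := hKbd
  -- componentwise facts about Φ
  have hΦk : ∀ k, Measurable fun x => Φ x k :=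
    fun k => (measurable_pi_apply k).comp hΦmeas
  have hΦkb : ∀ (k : Fin d) (x : X), |Φ x k| ≤ CΦ :=
    fun k x => le_trans (by simpa using norm_le_pi_norm (Φ x) k) (hCΦ x)
  -- integrability helpers
  have hInt : ∀ (f : X → ℝ) (C : ℝ), Measurable f → (∀ x, |f x| ≤ C) → Integrable f P :=
    fun f C hf hC => ⟨hf.aestronglyMeasurable,
      HasFiniteIntegral.of_bounded (C := C) (ae_of_all _ fun x => by simpa using hC x)⟩
  have hInt2 : ∀ (f : X × X → ℝ) (C : ℝ), Measurable f → (∀ p, |f p| ≤ C) →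
      Integrable f (P.prod P) :=
    fun f C hf hC => ⟨hf.aestronglyMeasurable,
      HasFiniteIntegral.of_bounded (C := C) (ae_of_all _ fun x => by simpa using hC x)⟩
  -- the function h
  set h : Fin d → X → ℝ := fun k x => ∫ z, Φ z k * K z x ∂P with hh
  have hhm : ∀ k, Measurable (h k) := by
    intro k
    have : Measurable fun p : X × X => Φ p.2 k * K p.2 p.1 :=
      ((hΦk k).comp measurable_snd).mul (hKmeas.comp (measurable_snd.prodMk measurable_fst))
    exact this.stronglyMeasurable.integral_prod_right'.measurable
  have hmulbd : ∀ (k : Fin d) (z y : X), |Φ z k * K z y| ≤ CΦ * CK := by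
    intro k z y
    rw [abs_mul]
    exact mul_le_mul (hΦkb k z) (hCK z y) (abs_nonneg _) ((abs_nonneg _).trans (hΦkb k z))
  have hhb : ∀ (k : Fin d) (x : X), |h k x| ≤ CΦ * CK := by
    intro k x
    have := norm_integral_le_of_norm_le_const (μ := P)
      (f := fun z => Φ z k * K z x) (C := CΦ * CK)
      (ae_of_all _ fun z => by simpa only [Real.norm_eq_abs] using hmulbd k z x)
    simpa using this
  -- flip lemma
  have hflip : ∀ (y : X) (k' : Fin d), (∫ z, Φ z k' * K y z ∂P) = h k' y := by
    intro y k'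
    refine integral_congr_ae (ae_of_all _ fun z => ?_)
    show Φ z k' * K y z = Φ z k' * K z y
    rw [hKsymm]
  -- Kδ rewritten
  have hKδ' : ∀ x x', Kδ x x' = K x x' - ∑ k', ∑ l, h k' x * A⁻¹ k' l * h l x' := by
    intro x x'
    rw [hKδ]
    simp only [hflip]
  -- A is symmetric
  have hAsymm : ∀ k l, A k l = A l k := by
    intro k l
    rw [hA, hA]
    have e1 : ∀ (a b : Fin d), (∫ x, (∫ z, Φ z a * K z x ∂P) * Φ x b ∂P)
        = ∫ x, ∫ z, Φ z a * K z x * Φ x b ∂P ∂P := by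
      intro a b
      refine integral_congr_ae (ae_of_all _ fun x => ?_)
      show (∫ z, Φ z a * K z x ∂P) * Φ x b = ∫ z, Φ z a * K z x * Φ x b ∂P
      exact (integral_mul_const (Φ x b) fun z => Φ z a * K z x).symm
    rw [e1, e1]
    have hswap : (∫ x, ∫ z, Φ z k * K z x * Φ x l ∂P ∂P)
        = ∫ z, ∫ x, Φ z k * K z x * Φ x l ∂P ∂P := by
      refine integral_integral_swap ?_
      refine hInt2 _ (CΦ * CK * CΦ) ?_ ?_
      · exact (((hΦk k).comp measurable_snd).mul
          (hKmeas.comp (measurable_snd.prodMk measurable_fst))).mul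
          ((hΦk l).comp measurable_fst)
      · intro p
        simp only [Function.uncurry]
        rw [abs_mul]
        exact mul_le_mul (hmulbd k p.2 p.1) (hΦkb l p.1) (abs_nonneg _)
          (mul_nonneg ((abs_nonneg _).trans (hΦkb k p.2)) ((abs_nonneg _).trans (hCK p.2 p.1)))
    rw [hswap]
    refine integral_congr_ae (ae_of_all _ fun x => ?_)
    refine integral_congr_ae (ae_of_all _ fun z => ?_)
    show Φ x k * K x z * Φ z l = Φ z l * K z x * Φ x k
    rw [hKsymm z x]; ring
  -- key lemma
  have key : ∀ (x' : X) (k : Fin d), ∫ x, Φ x k * Kδ x x' ∂P = 0 := by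
    intro x' k
    have hrw : ∀ x, Φ x k * Kδ x x'
        = Φ x k * K x x' - ∑ k', ∑ l, Φ x k * h k' x * (A⁻¹ k' l * h l x') := by
      intro x
      rw [hKδ', mul_sub]
      congr 1
      rw [Finset.mul_sum]
      refine Finset.sum_congr rfl fun k' _ => ?_
      rw [Finset.mul_sum]
      exact Finset.sum_congr rfl fun l _ => by ring
    have hint1 : Integrable (fun x => Φ x k * K x x') P :=
      hInt _ (CΦ * CK) ((hΦk k).mul (hKmeas.comp (measurable_id.prodMk measurable_const)))
        (fun x => hmulbd k x x')
    have hintT : ∀ (k' l : Fin d),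
        Integrable (fun x => Φ x k * h k' x * (A⁻¹ k' l * h l x')) P := by
      intro k' l
      refine hInt _ (CΦ * (CΦ * CK) * |A⁻¹ k' l * h l x'|) (((hΦk k).mul (hhm k')).mul_const _) ?_
      intro x
      rw [abs_mul]
      refine mul_le_mul_of_nonneg_right ?_ (abs_nonneg _)
      rw [abs_mul]
      exact mul_le_mul (hΦkb k x) (hhb k' x) (abs_nonneg _) ((abs_nonneg _).trans (hΦkb k x))
    have hint2 : Integrable (fun x => ∑ k', ∑ l, Φ x k * h k' x * (A⁻¹ k' l * h l x')) P := by
      refine integrable_finset_sum _ fun k' _ => ?_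
      exact integrable_finset_sum _ fun l _ => hintT k' l
    calc ∫ x, Φ x k * Kδ x x' ∂P
        = ∫ x, (Φ x k * K x x' - ∑ k', ∑ l, Φ x k * h k' x * (A⁻¹ k' l * h l x')) ∂P := by
          simp only [hrw]
      _ = (∫ x, Φ x k * K x x' ∂P)
          - ∑ k', ∑ l, (∫ x, Φ x k * h k' x ∂P) * (A⁻¹ k' l * h l x') := by
          rw [integral_sub hint1 hint2, integral_finset_sum _ fun k' _ =>
            integrable_finset_sum _ fun l _ => hintT k' l]
          congr 1
          refine Finset.sum_congr rfl fun k' _ => ?_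
          rw [integral_finset_sum _ fun l _ => hintT k' l]
          exact Finset.sum_congr rfl fun l _ => integral_mul_const _ _
      _ = h k x' - ∑ k', ∑ l, A k' k * (A⁻¹ k' l * h l x') := by
          congr 1
          refine Finset.sum_congr rfl fun k' _ => Finset.sum_congr rfl fun l _ => ?_
          congr 1
          rw [hA k' k]
          exact integral_congr_ae (ae_of_all _ fun x =>
            show Φ x k * h k' x = h k' x * Φ x k from mul_comm _ _)
      _ = 0 := by
          rw [Finset.sum_comm]
          have : ∀ l : Fin d, ∑ k', A k' k * (A⁻¹ k' l * h l x')
              = (A * A⁻¹) k l * h l x' := by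
            intro l
            rw [Matrix.mul_apply, Finset.sum_mul]
            exact Finset.sum_congr rfl fun k' _ => by rw [hAsymm k' k]; ring
          simp only [this, Matrix.mul_nonsing_inv A hAinv, Matrix.one_apply]
          simp [Finset.sum_ite_eq]
  -- boundedness and measurability of Kδ slices
  have hKδm : ∀ x', Measurable fun x => Kδ x x' := by
    intro x'
    have : (fun x => Kδ x x') = fun x => K x x' - ∑ k', ∑ l, h k' x * A⁻¹ k' l * h l x' := by
      funext x; rw [hKδ']
    rw [this]
    exact (hKmeas.comp (measurable_id.prodMk measurable_const)).sub
      (Finset.measurable_sum _ fun k' _ => Finset.measurable_sum _ fun l _ =>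
        (((hhm k').mul_const _).mul_const _))
  have hKδb : ∀ x' x, |Kδ x x'|
      ≤ CK + ∑ k', ∑ l, (CΦ * CK) * |A⁻¹ k' l| * |h l x'| := by
    intro x' x
    rw [hKδ']
    refine (abs_sub _ _).trans ?_
    refine add_le_add (hCK x x') ?_
    refine (Finset.abs_sum_le_sum_abs _ _).trans ?_
    refine Finset.sum_le_sum fun k' _ => ?_
    refine (Finset.abs_sum_le_sum_abs _ _).trans ?_
    refine Finset.sum_le_sum fun l _ => ?_
    rw [abs_mul, abs_mul]
    refine mul_le_mul_of_nonneg_right (mul_le_mul_of_nonneg_right (hhb k' x) (abs_nonneg _))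
      (abs_nonneg _)
  -- conclude
  intro m c xs k
  have hintI : ∀ i : Fin m, Integrable (fun x => Φ x k * (c i * Kδ x (xs i))) P := by
    intro i
    refine hInt _ (CΦ * (|c i| * (CK + ∑ k', ∑ l, (CΦ * CK) * |A⁻¹ k' l| * |h l (xs i)|)))
      ((hΦk k).mul (measurable_const.mul (hKδm (xs i)))) ?_
    intro x
    rw [abs_mul, abs_mul]
    refine mul_le_mul (hΦkb k x) (mul_le_mul_of_nonneg_left (hKδb (xs i) x) (abs_nonneg _))
      (mul_nonneg (abs_nonneg _) (abs_nonneg _)) ((abs_nonneg _).trans (hΦkb k x))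
  have : (fun x => Φ x k * (∑ i, c i * Kδ x (xs i)))
      = fun x => ∑ i, Φ x k * (c i * Kδ x (xs i)) := by
    funext x; rw [Finset.mul_sum]
  rw [this, integral_finset_sum _ fun i _ => hintI i]
  refine Finset.sum_eq_zero fun i _ => ?_
  have e : (fun x => Φ x k * (c i * Kδ x (xs i))) = fun x => c i * (Φ x k * Kδ x (xs i)) := by
    funext x; ring
  rw [e, integral_const_mul, key (xs i) k, mul_zero]
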